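/- There is a constant C > 0 such that for all sequences ε with |ε|_∞ ≤ 1/2, all i ≥ 0 and all Lipschitz f : ℕ → ℝ, |(Q_ε^i − Q_0^i) f|_∞ ≤ C i Lip(f) |ε|_∞. -/

import Mathlib

/-- The cookie transition operator `Q_ε`. -/
noncomputable def Qeps (ε : ℕ → ℝ) (f : ℕ → ℝ) (r : ℕ) : ℝ :=
  ∑' ℓ : ℕ, f (r + ℓ + 1) *
    ((2 : ℝ) ^ (-(ℓ + 1 : ℤ)) * (∏ i ∈ Finset.range ℓ, (1 + ε (r + i + 1)))
      * (1 - ε (r + ℓ + 1)))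

/-- The geometric(1/2) transition operator `Q_0`. -/
noncomputable def Q0 (f : ℕ → ℝ) (r : ℕ) : ℝ :=
  ∑' ℓ : ℕ, f (r + ℓ + 1) * (2 : ℝ) ^ (-(ℓ + 1 : ℤ))

noncomputable def wgt (ε : ℕ → ℝ) (r ℓ : ℕ) : ℝ :=
  (2 : ℝ) ^ (-(ℓ + 1 : ℤ)) * (∏ i ∈ Finset.range ℓ, (1 + ε (r + i + 1))) * (1 - ε (r + ℓ + 1))

noncomputable def uwgt (ℓ : ℕ) : ℝ := (2 : ℝ) ^ (-(ℓ + 1 : ℤ))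

lemma Qeps_eq (ε f : ℕ → ℝ) (r : ℕ) : Qeps ε f r = ∑' ℓ : ℕ, f (r + ℓ + 1) * wgt ε r ℓ := rfl
lemma Q0_eq (f : ℕ → ℝ) (r : ℕ) : Q0 f r = ∑' ℓ : ℕ, f (r + ℓ + 1) * uwgt ℓ := rfl

lemma two_zpow_eq (ℓ : ℕ) : (2 : ℝ) ^ (-(ℓ + 1 : ℤ)) = (1/2 : ℝ)^(ℓ+1) := by
  have h : ((ℓ:ℤ)+1) = ((ℓ+1 : ℕ) : ℤ) := by push_cast; ring
  rw [zpow_neg, h, zpow_natCast, one_div, inv_pow]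

lemma uwgt_eq (ℓ : ℕ) : uwgt ℓ = (1/2 : ℝ)^(ℓ+1) := two_zpow_eq ℓ

lemma uwgt_nonneg (ℓ : ℕ) : 0 ≤ uwgt ℓ := by rw [uwgt_eq]; positivity

lemma uwgt_le (ℓ : ℕ) : uwgt ℓ ≤ (3/4 : ℝ)^ℓ := by
  rw [uwgt_eq, pow_succ]
  calc (1/2:ℝ)^ℓ * (1/2) ≤ (3/4:ℝ)^ℓ * 1 := by
        apply mul_le_mul (pow_le_pow_left₀ (by norm_num) (by norm_num) ℓ) (by norm_num)
          (by norm_num) (by positivity)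
    _ = (3/4)^ℓ := mul_one _

lemma prod_sub_one_bound (a : ℕ → ℝ) (δ : ℝ) (hδ0 : 0 ≤ δ) (hδ : δ ≤ 1/2)
    (ha : ∀ k, |a k| ≤ δ) (n : ℕ) :
    |∏ k ∈ Finset.range n, (1 + a k) - 1| ≤ n * δ * (3/2)^n := by
  induction n with
  | zero => simp
  | succ n ih =>
    rw [Finset.prod_range_succ]
    have key : (∏ k ∈ Finset.range n, (1 + a k)) * (1 + a n) - 1
        = (∏ k ∈ Finset.range n, (1 + a k) - 1) * (1 + a n) + a n := by ring
    have h1 : |(∏ k ∈ Finset.range n, (1 + a k) - 1) * (1 + a n) + a n|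
        ≤ |∏ k ∈ Finset.range n, (1 + a k) - 1| * |1 + a n| + |a n| := by
      calc _ ≤ |(∏ k ∈ Finset.range n, (1 + a k) - 1) * (1 + a n)| + |a n| := abs_add_le _ _
        _ = _ := by rw [abs_mul]
    have h2 : |1 + a n| ≤ 3/2 := by
      have := ha n; rw [abs_le] at this ⊢; constructor <;> linarith
    have h3 : |∏ k ∈ Finset.range n, (1 + a k) - 1| * |1 + a n| ≤ (n * δ * (3/2)^n) * (3/2) :=
      mul_le_mul ih h2 (abs_nonneg _) (by positivity)
    have hpow : (1:ℝ) ≤ (3/2)^n * (3/2) := by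
      rw [← pow_succ]; exact one_le_pow₀ (by norm_num)
    calc |(∏ k ∈ Finset.range n, (1 + a k)) * (1 + a n) - 1|
        = |(∏ k ∈ Finset.range n, (1 + a k) - 1) * (1 + a n) + a n| := by rw [key]
      _ ≤ |∏ k ∈ Finset.range n, (1 + a k) - 1| * |1 + a n| + |a n| := h1
      _ ≤ (n * δ * (3/2)^n) * (3/2) + δ := add_le_add h3 (ha n)
      _ ≤ ↑(n+1) * δ * (3/2)^(n+1) := by
          push_cast
          rw [pow_succ]
          nlinarith [mul_le_mul_of_nonneg_left hpow hδ0]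

section weights
variable {ε : ℕ → ℝ} (hε : ∀ i, |ε i| ≤ 1/2)
include hε

lemma wgt_nonneg (r ℓ : ℕ) : 0 ≤ wgt ε r ℓ := by
  unfold wgt
  have h1 : ∀ i, (0:ℝ) ≤ 1 + ε i := fun i => by have := hε i; rw [abs_le] at this; linarith
  have h2 : (0:ℝ) ≤ 1 - ε (r + ℓ + 1) := by
    have := hε (r+ℓ+1); rw [abs_le] at this; linarith
  have h3 : (0:ℝ) ≤ ∏ i ∈ Finset.range ℓ, (1 + ε (r + i + 1)) :=
    Finset.prod_nonneg fun i _ => h1 _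
  positivity

lemma wgt_le (r ℓ : ℕ) : wgt ε r ℓ ≤ (3/4 : ℝ)^ℓ := by
  unfold wgt
  have h2 : (1:ℝ) - ε (r + ℓ + 1) ≤ 3/2 := by
    have := hε (r+ℓ+1); rw [abs_le] at this; linarith
  have h3 : ∏ i ∈ Finset.range ℓ, (1 + ε (r + i + 1)) ≤ (3/2)^ℓ := by
    calc ∏ i ∈ Finset.range ℓ, (1 + ε (r + i + 1)) ≤ ∏ _i ∈ Finset.range ℓ, (3/2 : ℝ) := by
          apply Finset.prod_le_prod
          · intro i _; have := hε (r+i+1); rw [abs_le] at this; linarith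
          · intro i _; have := hε (r+i+1); rw [abs_le] at this; linarith
      _ = (3/2)^ℓ := by rw [Finset.prod_const, Finset.card_range]
  have h1 : ∀ i, (0:ℝ) ≤ 1 + ε i := fun i => by have := hε i; rw [abs_le] at this; linarith
  have h0 : (0:ℝ) ≤ ∏ i ∈ Finset.range ℓ, (1 + ε (r + i + 1)) :=
    Finset.prod_nonneg fun i _ => h1 _
  rw [two_zpow_eq]
  have h2' : (0:ℝ) ≤ 1 - ε (r + ℓ + 1) := by
    have := hε (r+ℓ+1); rw [abs_le] at this; linarith
  calc (1/2:ℝ)^(ℓ+1) * (∏ i ∈ Finset.range ℓ, (1 + ε (r + i + 1))) * (1 - ε (r + ℓ + 1))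
      ≤ (1/2:ℝ)^(ℓ+1) * (3/2)^ℓ * (3/2) := by
        apply mul_le_mul _ h2 h2' (by positivity)
        exact mul_le_mul_of_nonneg_left h3 (by positivity)
    _ = (3/4)^ℓ * (3/4) := by
        rw [pow_succ]
        have hm : (1/2:ℝ)^ℓ * (3/2)^ℓ = (3/4)^ℓ := by rw [← mul_pow]; norm_num
        linear_combination (3/4:ℝ) * hm
    _ ≤ (3/4)^ℓ := by nlinarith [pow_nonneg (by norm_num : (0:ℝ) ≤ 3/4) ℓ]

lemma wgt_hasSum (r : ℕ) : HasSum (wgt ε r) 1 := by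
  set q : ℕ → ℝ := fun i => (1 + ε (r + i + 1)) / 2 with hq
  set P : ℕ → ℝ := fun n => ∏ i ∈ Finset.range n, q i with hP
  have hqb : ∀ i, q i ≤ 3/4 := fun i => by
    have := hε (r+i+1); rw [abs_le] at this; simp only [hq]; linarith
  have hq0 : ∀ i, 0 ≤ q i := fun i => by
    have := hε (r+i+1); rw [abs_le] at this; simp only [hq]; linarith
  have hw : ∀ ℓ, wgt ε r ℓ = P ℓ - P (ℓ+1) := by
    intro ℓ
    simp only [hP]
    rw [Finset.prod_range_succ]
    have h' : ∏ i ∈ Finset.range ℓ, q i - (∏ i ∈ Finset.range ℓ, q i) * q ℓ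
        = (∏ i ∈ Finset.range ℓ, q i) * (1 - q ℓ) := by ring
    rw [h']
    unfold wgt
    rw [two_zpow_eq]
    simp only [hq]
    rw [Finset.prod_div_distrib, Finset.prod_const, Finset.card_range]
    field_simp
    have h2 : (1/2:ℝ)^ℓ * 2^ℓ = 1 := by rw [← mul_pow]; norm_num
    linear_combination (∏ x ∈ Finset.range ℓ, (1 + ε (r + x + 1))) * (1 - ε (r + ℓ + 1)) * h2
  rw [hasSum_iff_tendsto_nat_of_nonneg (fun ℓ => wgt_nonneg hε r ℓ)]
  have hsum : ∀ n, ∑ ℓ ∈ Finset.range n, wgt ε r ℓ = 1 - P n := by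
    intro n
    calc ∑ ℓ ∈ Finset.range n, wgt ε r ℓ = ∑ ℓ ∈ Finset.range n, (P ℓ - P (ℓ+1)) :=
          Finset.sum_congr rfl fun ℓ _ => hw ℓ
      _ = P 0 - P n := Finset.sum_range_sub' P n
      _ = 1 - P n := by simp [hP]
  simp only [hsum]
  have hPto : Filter.Tendsto P Filter.atTop (nhds 0) := by
    have hb : ∀ n, P n ≤ (3/4:ℝ)^n := by
      intro n
      simp only [hP]
      calc ∏ i ∈ Finset.range n, q i ≤ ∏ _i ∈ Finset.range n, (3/4:ℝ) :=
            Finset.prod_le_prod (fun i _ => hq0 i) (fun i _ => hqb i)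
        _ = (3/4)^n := by rw [Finset.prod_const, Finset.card_range]
    have hb0 : ∀ n, 0 ≤ P n := fun n => Finset.prod_nonneg fun i _ => hq0 i
    exact squeeze_zero hb0 hb (tendsto_pow_atTop_nhds_zero_of_lt_one (by norm_num) (by norm_num))
  have h5 := hPto.const_sub (1:ℝ)
  simpa using h5

end weights

lemma uwgt_hasSum : HasSum uwgt 1 := by
  have h : HasSum (fun n : ℕ => (1/2:ℝ)^n) 2 := by
    have := hasSum_geometric_of_lt_one (by norm_num : (0:ℝ) ≤ 1/2) (by norm_num)
    norm_num at this
    exact this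
  have h2 := h.mul_left (1/2:ℝ)
  norm_num at h2
  have he : uwgt = (fun n : ℕ => 1/2 * (1/2:ℝ)^n) := by
    funext n; rw [uwgt_eq, pow_succ]; ring
  rw [he]
  exact h2

lemma summable_lin_geom (A B : ℝ) : Summable (fun ℓ : ℕ => (A + B*ℓ) * (3/4:ℝ)^ℓ) := by
  have h1 : Summable (fun ℓ : ℕ => A * (3/4:ℝ)^ℓ) :=
    (summable_geometric_of_lt_one (by norm_num) (by norm_num)).mul_left A
  have h2 : Summable (fun ℓ : ℕ => B * ((ℓ:ℝ) * (3/4:ℝ)^ℓ)) := by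
    have := summable_pow_mul_geometric_of_norm_lt_one (R := ℝ) 1
      (r := (3/4:ℝ)) (by rw [Real.norm_eq_abs, abs_of_nonneg (by norm_num : (0:ℝ) ≤ 3/4)]; norm_num)
    simpa using this.mul_left B
  have := h1.add h2
  convert this using 2 with ℓ
  ring

lemma summable_of_lin_geom_bound (v : ℕ → ℝ) (A B : ℝ)
    (h : ∀ ℓ, |v ℓ| ≤ (A + B*ℓ) * (3/4:ℝ)^ℓ) : Summable v := by
  apply Summable.of_norm_bounded (summable_lin_geom A B)
  intro ℓ; rw [Real.norm_eq_abs]; exact h ℓ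

lemma summable_mul_w (g : ℕ → ℝ) (A B : ℝ) (hg : ∀ n, |g n| ≤ A + B*n)
    (v : ℕ → ℝ) (hv0 : ∀ ℓ, 0 ≤ v ℓ) (hv : ∀ ℓ, v ℓ ≤ (3/4:ℝ)^ℓ) (r : ℕ) :
    Summable (fun ℓ => g (r+ℓ+1) * v ℓ) := by
  apply summable_of_lin_geom_bound _ (A + B*(r+1)) B
  intro ℓ
  rw [abs_mul, abs_of_nonneg (hv0 ℓ)]
  have h1 : |g (r+ℓ+1)| ≤ (A + B*(r+1)) + B*ℓ := by
    have := hg (r+ℓ+1); push_cast at this; linarith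
  calc |g (r+ℓ+1)| * v ℓ ≤ ((A + B*(r+1)) + B*ℓ) * (3/4:ℝ)^ℓ :=
        mul_le_mul h1 (hv ℓ) (hv0 ℓ) (le_trans (abs_nonneg _) h1)
    _ = _ := by ring

noncomputable def Scst : ℝ := ∑' ℓ : ℕ, ((ℓ:ℝ)+1)^2 * (3/4:ℝ)^(ℓ+1)

lemma summable_Scst : Summable (fun ℓ : ℕ => ((ℓ:ℝ)+1)^2 * (3/4:ℝ)^(ℓ+1)) := by
  have h := summable_pow_mul_geometric_of_norm_lt_one (R := ℝ) 2
    (r := (3/4:ℝ)) (by rw [Real.norm_eq_abs, abs_of_nonneg (by norm_num : (0:ℝ) ≤ 3/4)]; norm_num)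
  have h2 := (summable_nat_add_iff 1).2 h
  convert h2 using 2 with ℓ
  · rfl
  push_cast
  ring

lemma Scst_nonneg : 0 ≤ Scst :=
  tsum_nonneg fun ℓ => by positivity

lemma lip_growth (h : ℕ → ℝ) (K : ℝ)
    (hl : ∀ r r' : ℕ, |h r - h r'| ≤ K * |(r:ℝ) - r'|) (n : ℕ) :
    |h n| ≤ |h 0| + K * n := by
  have h1 := hl n 0
  simp at h1
  calc |h n| ≤ |h n - h 0| + |h 0| := by
        have := abs_add_le (h n - h 0) (h 0); simpa using this
    _ ≤ |h 0| + K * n := by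
        rw [add_comm]; gcongr

lemma Q0_lip (f : ℕ → ℝ) (K : ℝ)
    (hf : ∀ r r' : ℕ, |f r - f r'| ≤ K * |(r:ℝ) - r'|) (r r' : ℕ) :
    |Q0 f r - Q0 f r'| ≤ K * |(r:ℝ) - r'| := by
  have hgrow := lip_growth f K hf
  have S1 : Summable (fun ℓ => f (r+ℓ+1) * uwgt ℓ) :=
    summable_mul_w f (|f 0|) K hgrow uwgt uwgt_nonneg uwgt_le r
  have S2 : Summable (fun ℓ => f (r'+ℓ+1) * uwgt ℓ) :=
    summable_mul_w f (|f 0|) K hgrow uwgt uwgt_nonneg uwgt_le r'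
  rw [Q0_eq, Q0_eq, ← Summable.tsum_sub S1 S2]
  have hterm : ∀ ℓ, f (r+ℓ+1) * uwgt ℓ - f (r'+ℓ+1) * uwgt ℓ
      = (f (r+ℓ+1) - f (r'+ℓ+1)) * uwgt ℓ := fun ℓ => by ring
  simp only [hterm]
  have hbd : ∀ ℓ : ℕ, |(f (r+ℓ+1) - f (r'+ℓ+1)) * uwgt ℓ| ≤ (K * |(r:ℝ) - r'|) * uwgt ℓ := by
    intro ℓ
    rw [abs_mul, abs_of_nonneg (uwgt_nonneg ℓ)]
    apply mul_le_mul_of_nonneg_right _ (uwgt_nonneg ℓ)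
    have := hf (r+ℓ+1) (r'+ℓ+1)
    have hc : |((r:ℝ)+ℓ+1) - ((r':ℝ)+ℓ+1)| = |(r:ℝ) - r'| := by congr 1; ring
    push_cast at this
    rw [hc] at this
    exact this
  have Sb : Summable (fun ℓ => (K * |(r:ℝ) - r'|) * uwgt ℓ) :=
    uwgt_hasSum.summable.mul_left _
  have Sabs : Summable (fun ℓ => |(f (r+ℓ+1) - f (r'+ℓ+1)) * uwgt ℓ|) :=
    Summable.of_nonneg_of_le (fun ℓ => abs_nonneg _) hbd Sb
  calc |∑' ℓ, (f (r+ℓ+1) - f (r'+ℓ+1)) * uwgt ℓ|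
      ≤ ∑' ℓ, |(f (r+ℓ+1) - f (r'+ℓ+1)) * uwgt ℓ| := by
        have := norm_tsum_le_tsum_norm (f := fun ℓ => (f (r+ℓ+1) - f (r'+ℓ+1)) * uwgt ℓ)
          (by simpa only [Real.norm_eq_abs] using Sabs)
        simpa only [Real.norm_eq_abs] using this
    _ ≤ ∑' ℓ, (K * |(r:ℝ) - r'|) * uwgt ℓ := Summable.tsum_le_tsum hbd Sabs Sb
    _ = K * |(r:ℝ) - r'| := by
        rw [(uwgt_hasSum.mul_left (K * |(r:ℝ) - r'|)).tsum_eq, mul_one]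

lemma Qeps_contract {ε : ℕ → ℝ} (hε : ∀ i, |ε i| ≤ 1/2) (g h : ℕ → ℝ) (M A A' B : ℝ)
    (hg : ∀ n, |g n| ≤ A + B*n) (hh : ∀ n, |h n| ≤ A' + B*n)
    (hgh : ∀ n, |g n - h n| ≤ M) (r : ℕ) :
    |Qeps ε g r - Qeps ε h r| ≤ M := by
  have S1 : Summable (fun ℓ => g (r+ℓ+1) * wgt ε r ℓ) :=
    summable_mul_w g A B hg _ (wgt_nonneg hε r) (wgt_le hε r) r
  have S2 : Summable (fun ℓ => h (r+ℓ+1) * wgt ε r ℓ) :=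
    summable_mul_w h A' B hh _ (wgt_nonneg hε r) (wgt_le hε r) r
  rw [Qeps_eq, Qeps_eq, ← Summable.tsum_sub S1 S2]
  have hterm : ∀ ℓ, g (r+ℓ+1) * wgt ε r ℓ - h (r+ℓ+1) * wgt ε r ℓ
      = (g (r+ℓ+1) - h (r+ℓ+1)) * wgt ε r ℓ := fun ℓ => by ring
  simp only [hterm]
  have hbd : ∀ ℓ : ℕ, |(g (r+ℓ+1) - h (r+ℓ+1)) * wgt ε r ℓ| ≤ M * wgt ε r ℓ := by
    intro ℓ
    rw [abs_mul, abs_of_nonneg (wgt_nonneg hε r ℓ)]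
    exact mul_le_mul_of_nonneg_right (hgh _) (wgt_nonneg hε r ℓ)
  have Sb : Summable (fun ℓ => M * wgt ε r ℓ) := (wgt_hasSum hε r).summable.mul_left _
  have Sabs : Summable (fun ℓ => |(g (r+ℓ+1) - h (r+ℓ+1)) * wgt ε r ℓ|) :=
    Summable.of_nonneg_of_le (fun ℓ => abs_nonneg _) hbd Sb
  calc |∑' ℓ, (g (r+ℓ+1) - h (r+ℓ+1)) * wgt ε r ℓ|
      ≤ ∑' ℓ, |(g (r+ℓ+1) - h (r+ℓ+1)) * wgt ε r ℓ| := by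
        have := norm_tsum_le_tsum_norm (f := fun ℓ => (g (r+ℓ+1) - h (r+ℓ+1)) * wgt ε r ℓ)
          (by simpa only [Real.norm_eq_abs] using Sabs)
        simpa only [Real.norm_eq_abs] using this
    _ ≤ ∑' ℓ, M * wgt ε r ℓ := Summable.tsum_le_tsum hbd Sabs Sb
    _ = M := by rw [((wgt_hasSum hε r).mul_left M).tsum_eq, mul_one]

lemma wgt_sub_uwgt_bound {ε : ℕ → ℝ} (δ : ℝ) (hδ0 : 0 ≤ δ) (hδ : δ ≤ 1/2)
    (hεδ : ∀ j, |ε j| ≤ δ) (r ℓ : ℕ) :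
    |wgt ε r ℓ - uwgt ℓ| ≤ ((ℓ:ℝ)+1) * δ * (3/4:ℝ)^(ℓ+1) := by
  set a : ℕ → ℝ := fun k => if k < ℓ then ε (r+k+1) else -(ε (r+ℓ+1)) with ha_def
  have ha : ∀ k, |a k| ≤ δ := by
    intro k
    simp only [ha_def]
    split
    · exact hεδ _
    · rw [abs_neg]; exact hεδ _
  have hprod : ∏ k ∈ Finset.range (ℓ+1), (1 + a k)
      = (∏ i ∈ Finset.range ℓ, (1 + ε (r+i+1))) * (1 - ε (r+ℓ+1)) := by
    rw [Finset.prod_range_succ]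
    congr 1
    · refine Finset.prod_congr rfl fun k hk => ?_
      simp only [ha_def]
      rw [if_pos (Finset.mem_range.mp hk)]
    · simp only [ha_def]
      rw [if_neg (lt_irrefl ℓ)]
      ring
  have hw : wgt ε r ℓ - uwgt ℓ = uwgt ℓ * (∏ k ∈ Finset.range (ℓ+1), (1 + a k) - 1) := by
    rw [hprod]; unfold wgt uwgt; ring
  rw [hw, abs_mul, abs_of_nonneg (uwgt_nonneg ℓ)]
  have hb := prod_sub_one_bound a δ hδ0 hδ ha (ℓ+1)
  have hu : uwgt ℓ = (1/2:ℝ)^(ℓ+1) := uwgt_eq ℓ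
  calc uwgt ℓ * |∏ k ∈ Finset.range (ℓ+1), (1 + a k) - 1|
      ≤ (1/2:ℝ)^(ℓ+1) * ((↑(ℓ+1)) * δ * (3/2:ℝ)^(ℓ+1)) := by
        rw [hu]
        exact mul_le_mul_of_nonneg_left hb (by positivity)
    _ = ((ℓ:ℝ)+1) * δ * (3/4:ℝ)^(ℓ+1) := by
        have hm : (1/2:ℝ)^(ℓ+1) * (3/2:ℝ)^(ℓ+1) = (3/4:ℝ)^(ℓ+1) := by rw [← mul_pow]; norm_num
        push_cast
        linear_combination ((ℓ:ℝ)+1) * δ * hm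

lemma Rbound {ε : ℕ → ℝ} (hε : ∀ i, |ε i| ≤ 1/2) (δ : ℝ) (hδ0 : 0 ≤ δ) (hδ : δ ≤ 1/2)
    (hεδ : ∀ j, |ε j| ≤ δ) (h : ℕ → ℝ) (K : ℝ) (hK : 0 ≤ K)
    (hl : ∀ r r' : ℕ, |h r - h r'| ≤ K * |(r:ℝ) - r'|) (r : ℕ) :
    |Qeps ε h r - Q0 h r| ≤ Scst * K * δ := by
  have hgrow := lip_growth h K hl
  have S1 : Summable (fun ℓ => h (r+ℓ+1) * wgt ε r ℓ) :=
    summable_mul_w h (|h 0|) K hgrow _ (wgt_nonneg hε r) (wgt_le hε r) r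
  have S2 : Summable (fun ℓ => h (r+ℓ+1) * uwgt ℓ) :=
    summable_mul_w h (|h 0|) K hgrow uwgt uwgt_nonneg uwgt_le r
  have hd_sum : Summable (fun ℓ => wgt ε r ℓ - uwgt ℓ) :=
    (wgt_hasSum hε r).summable.sub uwgt_hasSum.summable
  have hd_has : HasSum (fun ℓ => wgt ε r ℓ - uwgt ℓ) 0 := by
    have := (wgt_hasSum hε r).sub uwgt_hasSum
    simpa using this
  have S3 : Summable (fun ℓ => h (r+ℓ+1) * (wgt ε r ℓ - uwgt ℓ)) := by
    have := S1.sub S2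
    convert this using 2 with ℓ
    · rfl
    ring
  have S4 : Summable (fun ℓ => (h (r+ℓ+1) - h r) * (wgt ε r ℓ - uwgt ℓ)) := by
    have := S3.sub (hd_sum.mul_left (h r))
    convert this using 2 with ℓ
    · rfl
    ring
  have key : Qeps ε h r - Q0 h r
      = ∑' ℓ, (h (r+ℓ+1) - h r) * (wgt ε r ℓ - uwgt ℓ) := by
    rw [Qeps_eq, Q0_eq, ← Summable.tsum_sub S1 S2]
    have e1 : ∀ ℓ, h (r+ℓ+1) * wgt ε r ℓ - h (r+ℓ+1) * uwgt ℓ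
        = (h (r+ℓ+1) - h r) * (wgt ε r ℓ - uwgt ℓ) + h r * (wgt ε r ℓ - uwgt ℓ) :=
      fun ℓ => by ring
    simp only [e1]
    rw [Summable.tsum_add S4 (hd_sum.mul_left (h r))]
    rw [tsum_mul_left, hd_has.tsum_eq]
    ring
  rw [key]
  have hbd : ∀ ℓ : ℕ, |(h (r+ℓ+1) - h r) * (wgt ε r ℓ - uwgt ℓ)|
      ≤ (K * δ) * (((ℓ:ℝ)+1)^2 * (3/4:ℝ)^(ℓ+1)) := by
    intro ℓ
    rw [abs_mul]
    have h1 : |h (r+ℓ+1) - h r| ≤ K * ((ℓ:ℝ)+1) := by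
      have := hl (r+ℓ+1) r
      have hc : |((r:ℝ)+ℓ+1) - (r:ℝ)| = (ℓ:ℝ)+1 := by
        have he : ((r:ℝ)+ℓ+1) - (r:ℝ) = (ℓ:ℝ)+1 := by ring
        rw [he, abs_of_nonneg (by positivity)]
      push_cast at this
      rw [hc] at this
      exact this
    have h2 := wgt_sub_uwgt_bound δ hδ0 hδ hεδ r ℓ
    calc |h (r+ℓ+1) - h r| * |wgt ε r ℓ - uwgt ℓ|
        ≤ (K * ((ℓ:ℝ)+1)) * (((ℓ:ℝ)+1) * δ * (3/4:ℝ)^(ℓ+1)) :=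
          mul_le_mul h1 h2 (abs_nonneg _) (by positivity)
      _ = (K * δ) * (((ℓ:ℝ)+1)^2 * (3/4:ℝ)^(ℓ+1)) := by ring
  have Sb : Summable (fun ℓ : ℕ => (K * δ) * (((ℓ:ℝ)+1)^2 * (3/4:ℝ)^(ℓ+1))) :=
    summable_Scst.mul_left _
  have Sabs : Summable (fun ℓ => |(h (r+ℓ+1) - h r) * (wgt ε r ℓ - uwgt ℓ)|) :=
    Summable.of_nonneg_of_le (fun ℓ => abs_nonneg _) hbd Sb
  calc |∑' ℓ, (h (r+ℓ+1) - h r) * (wgt ε r ℓ - uwgt ℓ)|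
      ≤ ∑' ℓ, |(h (r+ℓ+1) - h r) * (wgt ε r ℓ - uwgt ℓ)| := by
        have := norm_tsum_le_tsum_norm (f := fun ℓ => (h (r+ℓ+1) - h r) * (wgt ε r ℓ - uwgt ℓ))
          (by simpa only [Real.norm_eq_abs] using Sabs)
        simpa only [Real.norm_eq_abs] using this
    _ ≤ ∑' ℓ : ℕ, (K * δ) * (((ℓ:ℝ)+1)^2 * (3/4:ℝ)^(ℓ+1)) := Summable.tsum_le_tsum hbd Sabs Sb
    _ = (K * δ) * Scst := by rw [tsum_mul_left]; rfl
    _ = Scst * K * δ := by ring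

theorem stmt_10 :
    ∃ C : ℝ, 0 < C ∧
      ∀ ε : ℕ → ℝ, (∀ i, |ε i| ≤ 1 / 2) →
        ∀ i : ℕ, ∀ f : ℕ → ℝ, ∀ K : ℝ, 0 ≤ K →
          (∀ r r' : ℕ, |f r - f r'| ≤ K * |(r : ℝ) - r'|) →
          ∀ r : ℕ,
            |(Qeps ε)^[i] f r - Q0^[i] f r| ≤ C * i * K * (⨆ j, |ε j|) := by
  refine ⟨Scst + 1, by linarith [Scst_nonneg], ?_⟩
  intro ε hε i f K hK hf r
  set δ := ⨆ j, |ε j| with hδdef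
  have hbdd : BddAbove (Set.range fun j => |ε j|) := ⟨1/2, by rintro x ⟨j, rfl⟩; exact hε j⟩
  have hεδ : ∀ j, |ε j| ≤ δ := fun j => le_ciSup hbdd j
  have hδ0 : 0 ≤ δ := le_trans (abs_nonneg _) (hεδ 0)
  have hδh : δ ≤ 1/2 := ciSup_le hε
  have hlip : ∀ n, ∀ r r' : ℕ, |Q0^[n] f r - Q0^[n] f r'| ≤ K * |(r:ℝ) - r'| := by
    intro n
    induction n with
    | zero => simpa using hf
    | succ n ih =>
      intro r r'
      rw [Function.iterate_succ_apply']
      exact Q0_lip _ K ih r r'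
  have claim : ∀ n, ∀ r : ℕ, |(Qeps ε)^[n] f r - Q0^[n] f r| ≤ Scst * n * K * δ := by
    intro n
    induction n with
    | zero => intro r; simp
    | succ n ih =>
      intro r
      set g := (Qeps ε)^[n] f with hg
      set h := Q0^[n] f with hh
      have hgrow_h : ∀ m, |h m| ≤ |h 0| + K * m := lip_growth h K (hlip n)
      have hgrow_g : ∀ m, |g m| ≤ (|h 0| + Scst * n * K * δ) + K * m := by
        intro m
        have h1 := ih m
        have h2 := hgrow_h m
        calc |g m| ≤ |g m - h m| + |h m| := by
              have h3 := abs_add_le (g m - h m) (h m); simpa using h3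
          _ ≤ Scst*n*K*δ + (|h 0| + K*m) := add_le_add h1 h2
          _ = _ := by ring
      rw [Function.iterate_succ_apply', Function.iterate_succ_apply']
      have step1 : |Qeps ε g r - Qeps ε h r| ≤ Scst * n * K * δ :=
        Qeps_contract hε g h (Scst*n*K*δ) (|h 0| + Scst*n*K*δ) (|h 0|) K hgrow_g hgrow_h ih r
      have step2 : |Qeps ε h r - Q0 h r| ≤ Scst * K * δ :=
        Rbound hε δ hδ0 hδh hεδ h K hK (hlip n) r
      calc |Qeps ε g r - Q0 h r|
          ≤ |Qeps ε g r - Qeps ε h r| + |Qeps ε h r - Q0 h r| := by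
            have h4 := abs_add_le (Qeps ε g r - Qeps ε h r) (Qeps ε h r - Q0 h r)
            simpa using h4
        _ ≤ Scst*n*K*δ + Scst*K*δ := add_le_add step1 step2
        _ = Scst * (↑(n+1)) * K * δ := by push_cast; ring
  have hmain := claim i r
  have hfin : Scst * i * K * δ ≤ (Scst + 1) * i * K * δ := by
    have hp : (0:ℝ) ≤ (i:ℝ) * K * δ := by positivity
    nlinarith
  linarith
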